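/- Fix γ ∈ (0,1) and R ∈ (0,γ), and let θ = (0,1). For every α > 0 there exist δ > 0 (the tent-width parameter of F), c > 0 and r > 0 such that for each z ∈ {x⋆, y⋆} and every dθ = (dθ₀, dθ₁) ∈ ℝ² with 0 < ‖dθ‖ < r satisfying |z·dθ₀ + F(z)·dθ₁| ≥ α‖dθ‖₁, the cost difference is strictly positive and bounded below: C[z](θ + dθ) − C[z](θ) ≥ c·‖dθ‖₁. -/

import Mathlib

open MeasureTheory

/-- The tent (spike) function of width `2δ` centered at `a`. -/
noncomputable def tent (a δ x : ℝ) : ℝ :=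
  if x ∈ Set.Icc (a - δ) a then (x - (a - δ)) / δ
  else if x ∈ Set.Icc a (a + δ) then ((a + δ) - x) / δ
  else 0

/-- The nonlinear feature `F(x) = ω₀|x| + Σᵢ ωᵢ Λ_{aᵢ,δᵢ}(x)` with the paper's parameters
`ω₀ = −0.5, a₁ = −2, δ₁ = 0.1, ω₁ = 3, a₂ = 1.5, a₃ = 1.8, ω₂ = ω₃ = 0.2, δ₂ = δ₃ = δ`. -/
noncomputable def Fex (δ x : ℝ) : ℝ :=
  (-0.5) * |x| + 3 * tent (-2) 0.1 x + 0.2 * tent 1.5 δ x + 0.2 * tent 1.8 δ x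

/-- The closed-loop trajectory: `x₀ = z`, `x_{t+1} = u_t = θ₀ x_t + θ₁ F(x_t)`. -/
noncomputable def traj (δ : ℝ) (θ : ℝ × ℝ) (z : ℝ) : ℕ → ℝ
  | 0 => z
  | t + 1 => θ.1 * traj δ θ z t + θ.2 * Fex δ (traj δ θ z t)

/-- The discounted cost `C[z](θ) = Σ_t γᵗ (x_t² + R u_t²)` (note `u_t = x_{t+1}`). -/
noncomputable def cost (γ R δ : ℝ) (θ : ℝ × ℝ) (z : ℝ) : ℝ :=
  ∑' t : ℕ, γ ^ t * ((traj δ θ z t) ^ 2 + R * (traj δ θ z (t + 1)) ^ 2)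

/-- `x⋆ = min F⁻¹({a₂})`, the smallest preimage of `a₂ = 1.5` under `F`. -/
noncomputable def xstar (δ : ℝ) : ℝ := sInf {x : ℝ | Fex δ x = 1.5}

/-- `y⋆ = min F⁻¹({a₃})`, the smallest preimage of `a₃ = 1.8` under `F`. -/
noncomputable def ystar (δ : ℝ) : ℝ := sInf {x : ℝ | Fex δ x = 1.8}

/-- The ℓ¹ norm `‖(a,b)‖₁ = |a| + |b|` on `ℝ²`. -/
noncomputable def l1 (dθ : ℝ × ℝ) : ℝ := |dθ.1| + |dθ.2|

lemma tent_zero_of_lt {a δ x : ℝ} (hδ : 0 ≤ δ) (h : x < a - δ) : tent a δ x = 0 := by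
  unfold tent
  rw [if_neg, if_neg]
  · rintro ⟨h1, h2⟩; linarith
  · rintro ⟨h1, h2⟩; linarith

lemma tent_zero_of_gt {a δ x : ℝ} (hδ : 0 ≤ δ) (h : a + δ < x) : tent a δ x = 0 := by
  unfold tent
  rw [if_neg, if_neg]
  · rintro ⟨h1, h2⟩; linarith
  · rintro ⟨h1, h2⟩; linarith

lemma tent_left {a δ x : ℝ} (h1 : a - δ ≤ x) (h2 : x ≤ a) : tent a δ x = (x - (a - δ)) / δ := by
  unfold tent
  rw [if_pos ⟨h1, h2⟩]

lemma tent_right {a δ x : ℝ} (h1 : a < x) (h2 : x ≤ a + δ) :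
    tent a δ x = ((a + δ) - x) / δ := by
  unfold tent
  rw [if_neg, if_pos ⟨le_of_lt h1, h2⟩]
  rintro ⟨h3, h4⟩; linarith

lemma Fex_neg {δ x : ℝ} (hδ0 : 0 < δ) (hδ1 : δ ≤ 0.1) (h1 : -1.9 < x) (h2 : x < 0) :
    Fex δ x = 0.5 * x := by
  unfold Fex
  rw [abs_of_neg h2, tent_zero_of_gt (by norm_num) (by linarith : (-2:ℝ) + 0.1 < x),
    tent_zero_of_lt hδ0.le (by linarith : x < 1.5 - δ),
    tent_zero_of_lt hδ0.le (by linarith : x < 1.8 - δ)]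
  ring

lemma Fex_low {δ x : ℝ} (hδ0 : 0 < δ) (hδ1 : δ ≤ 0.1) (h : x < -2.1) : Fex δ x = 0.5 * x := by
  unfold Fex
  rw [abs_of_neg (by linarith : x < 0),
    tent_zero_of_lt (by norm_num) (by linarith : x < (-2:ℝ) - 0.1),
    tent_zero_of_lt hδ0.le (by linarith : x < 1.5 - δ),
    tent_zero_of_lt hδ0.le (by linarith : x < 1.8 - δ)]
  ring

lemma Fex_mid {δ x : ℝ} (hδ0 : 0 < δ) (hδ1 : δ ≤ 0.1) (h1 : -2.1 ≤ x) (h2 : x ≤ -2) :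
    Fex δ x = 30.5 * x + 63 := by
  unfold Fex
  rw [abs_of_neg (by linarith : x < 0),
    tent_left (by linarith : (-2:ℝ) - 0.1 ≤ x) h2,
    tent_zero_of_lt hδ0.le (by linarith : x < 1.5 - δ),
    tent_zero_of_lt hδ0.le (by linarith : x < 1.8 - δ)]
  norm_num
  ring

lemma Fex_near15 {δ e : ℝ} (hδ0 : 0 < δ) (hδ1 : δ ≤ 0.1) (he : |e| ≤ δ) :
    Fex δ (1.5 + e) = -0.55 - 0.5 * e - (0.2 / δ) * |e| := by
  obtain ⟨he1, he2⟩ := abs_le.mp he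
  unfold Fex
  rw [abs_of_pos (by linarith : (0:ℝ) < 1.5 + e),
    tent_zero_of_gt (by norm_num) (by linarith : (-2:ℝ) + 0.1 < 1.5 + e),
    tent_zero_of_lt hδ0.le (by linarith : (1.5:ℝ) + e < 1.8 - δ)]
  rcases le_or_gt e 0 with h | h
  · rw [tent_left (by linarith : (1.5:ℝ) - δ ≤ 1.5 + e) (by linarith : (1.5:ℝ) + e ≤ 1.5),
      abs_of_nonpos h]
    field_simp
    ring
  · rw [tent_right (by linarith : (1.5:ℝ) < 1.5 + e) (by linarith : (1.5:ℝ) + e ≤ 1.5 + δ),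
      abs_of_pos h]
    field_simp
    ring

lemma Fex_near18 {δ e : ℝ} (hδ0 : 0 < δ) (hδ1 : δ ≤ 0.1) (he : |e| ≤ δ) :
    Fex δ (1.8 + e) = -0.7 - 0.5 * e - (0.2 / δ) * |e| := by
  obtain ⟨he1, he2⟩ := abs_le.mp he
  unfold Fex
  rw [abs_of_pos (by linarith : (0:ℝ) < 1.8 + e),
    tent_zero_of_gt (by norm_num) (by linarith : (-2:ℝ) + 0.1 < 1.8 + e),
    tent_zero_of_gt hδ0.le (by linarith : (1.5:ℝ) + δ < 1.8 + e)]
  rcases le_or_gt e 0 with h | h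
  · rw [tent_left (by linarith : (1.8:ℝ) - δ ≤ 1.8 + e) (by linarith : (1.8:ℝ) + e ≤ 1.8),
      abs_of_nonpos h]
    field_simp
    ring
  · rw [tent_right (by linarith : (1.8:ℝ) < 1.8 + e) (by linarith : (1.8:ℝ) + e ≤ 1.8 + δ),
      abs_of_pos h]
    field_simp
    ring

lemma xstar_eq {δ : ℝ} (hδ0 : 0 < δ) (hδ1 : δ ≤ 0.1) : xstar δ = -123 / 61 := by
  have hL : IsLeast {x : ℝ | Fex δ x = 1.5} (-123 / 61) := by
    constructor
    · show Fex δ (-123 / 61) = 1.5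
      rw [Fex_mid hδ0 hδ1 (by norm_num) (by norm_num)]; norm_num
    · intro x hx
      by_contra hcon
      push_neg at hcon
      rcases lt_or_ge x (-2.1) with h1 | h1
      · rw [Set.mem_setOf_eq, Fex_low hδ0 hδ1 h1] at hx; linarith
      · rw [Set.mem_setOf_eq, Fex_mid hδ0 hδ1 h1 (by linarith)] at hx; linarith
  exact hL.csInf_eq

lemma ystar_eq {δ : ℝ} (hδ0 : 0 < δ) (hδ1 : δ ≤ 0.1) : ystar δ = -612 / 305 := by
  have hL : IsLeast {x : ℝ | Fex δ x = 1.8} (-612 / 305) := by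
    constructor
    · show Fex δ (-612 / 305) = 1.8
      rw [Fex_mid hδ0 hδ1 (by norm_num) (by norm_num)]; norm_num
    · intro x hx
      by_contra hcon
      push_neg at hcon
      rcases lt_or_ge x (-2.1) with h1 | h1
      · rw [Set.mem_setOf_eq, Fex_low hδ0 hδ1 h1] at hx; linarith
      · rw [Set.mem_setOf_eq, Fex_mid hδ0 hδ1 h1 (by linarith)] at hx; linarith
  exact hL.csInf_eq

lemma traj_geom {δ : ℝ} {θ : ℝ × ℝ} {z W s : ℝ} (hδ0 : 0 < δ) (hδ1 : δ ≤ 0.1)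
    (h2 : traj δ θ z 2 = W) (hW1 : -1.9 < W) (hW0 : W < 0)
    (hs0 : 0 < s) (hs1 : s ≤ 1) (hθ : θ.1 + θ.2 * 0.5 = s) :
    ∀ t, traj δ θ z (t + 2) = W * s ^ t := by
  intro t
  induction t with
  | zero => simpa using h2
  | succ t ih =>
    have hst0 : 0 < s ^ t := pow_pos hs0 t
    have hst1 : s ^ t ≤ 1 := pow_le_one₀ hs0.le hs1
    have hx0 : W * s ^ t < 0 := mul_neg_of_neg_of_pos hW0 hst0
    have hx1 : -1.9 < W * s ^ t := by nlinarith
    have : traj δ θ z (t + 1 + 2) = θ.1 * (W * s ^ t) + θ.2 * Fex δ (W * s ^ t) := by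
      show θ.1 * traj δ θ z (t + 2) + θ.2 * Fex δ (traj δ θ z (t + 2)) = _
      rw [ih]
    rw [this, Fex_neg hδ0 hδ1 hx1 hx0, pow_succ]
    linear_combination (W * s ^ t) * hθ

lemma cost_closed {γ R δ : ℝ} {θ : ℝ × ℝ} {z p w σ : ℝ} (hγ0 : 0 < γ) (hγ1 : γ < 1)
    (hR0 : 0 ≤ R) (hσ0 : 0 ≤ σ) (hσ1 : σ ≤ 0.6)
    (h1 : traj δ θ z 1 = p) (h2 : ∀ t, traj δ θ z (t + 2) = w * σ ^ t) :
    cost γ R δ θ z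
      = z ^ 2 + R * p ^ 2 + γ * (p ^ 2 + R * w ^ 2)
        + γ ^ 2 * w ^ 2 * (1 + R * σ ^ 2) / (1 - γ * σ ^ 2) := by
  set f : ℕ → ℝ := fun t => γ ^ t * ((traj δ θ z t) ^ 2 + R * (traj δ θ z (t + 1)) ^ 2) with hf
  have hρ0 : 0 ≤ γ * σ ^ 2 := by positivity
  have hρ1 : γ * σ ^ 2 < 1 := by nlinarith
  have hf2 : ∀ t, f (t + 2) = (γ ^ 2 * w ^ 2 * (1 + R * σ ^ 2)) * (γ * σ ^ 2) ^ t := by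
    intro t
    have e1 : traj δ θ z (t + 2) = w * σ ^ t := h2 t
    have e2 : traj δ θ z (t + 2 + 1) = w * σ ^ (t + 1) := by
      have := h2 (t + 1); convert this using 2
    simp only [hf]
    rw [e1, e2]
    ring
  have hsum2 : Summable fun t => f (t + 2) := by
    apply Summable.congr (((summable_geometric_of_lt_one hρ0 hρ1).mul_left
      (γ ^ 2 * w ^ 2 * (1 + R * σ ^ 2))))
    intro t; exact (hf2 t).symm
  have hsum : Summable f := by
    rwa [← summable_nat_add_iff 2]
  have htail : ∑' t, f (t + 2) = γ ^ 2 * w ^ 2 * (1 + R * σ ^ 2) / (1 - γ * σ ^ 2) := by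
    rw [tsum_congr hf2, tsum_mul_left, tsum_geometric_of_lt_one hρ0 hρ1, div_eq_mul_inv]
  have hsplit := hsum.sum_add_tsum_nat_add 2
  have hf0 : f 0 = z ^ 2 + R * p ^ 2 := by
    simp only [hf]
    have h0 : traj δ θ z 0 = z := rfl
    rw [pow_zero, h0, h1]; ring
  have hf1 : f 1 = γ * (p ^ 2 + R * w ^ 2) := by
    simp only [hf]
    have : traj δ θ z 2 = w := by simpa using h2 0
    rw [h1, this]; ring
  have : cost γ R δ θ z = ∑' t, f t := rfl
  rw [this, ← hsplit, htail]
  rw [Finset.sum_range_succ, Finset.sum_range_one, hf0, hf1]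

lemma traj_zero (δ : ℝ) (θ : ℝ × ℝ) (z : ℝ) : traj δ θ z 0 = z := rfl

lemma traj_succ (δ : ℝ) (θ : ℝ × ℝ) (z : ℝ) (t : ℕ) :
    traj δ θ z (t + 1) = θ.1 * traj δ θ z t + θ.2 * Fex δ (traj δ θ z t) := rfl

set_option maxHeartbeats 8000000 in
lemma key (γ R : ℝ) (hγ0 : 0 < γ) (hγ1 : γ < 1) (hR0 : 0 < R) (hRγ : R < γ)
    (α : ℝ) (hα : 0 < α) (δ : ℝ) (hδ0 : 0 < δ) (hδ1 : δ ≤ 0.1)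
    (hδK : δ ≤ γ ^ 2 * α / 300)
    (z p w : ℝ) (hz1 : -2.1 ≤ z) (hz2 : z ≤ -2) (hFz : Fex δ z = p)
    (hp1 : 1.5 ≤ p) (hp2 : p ≤ 1.8) (hw1 : -0.7 ≤ w) (hw2 : w ≤ -0.55)
    (hnear : ∀ e : ℝ, |e| ≤ δ → Fex δ (p + e) = w - 0.5 * e - (0.2 / δ) * |e|)
    (dθ : ℝ × ℝ) (hne : dθ ≠ 0) (hrr : ‖dθ‖ < δ / 100)
    (hcone : α * l1 dθ ≤ |z * dθ.1 + p * dθ.2|) :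
    1 * l1 dθ ≤ cost γ R δ (((0, 1) : ℝ × ℝ) + dθ) z - cost γ R δ ((0, 1) : ℝ × ℝ) z := by
  obtain ⟨a, ha⟩ : ∃ x : ℝ, x = dθ.1 := ⟨_, rfl⟩
  obtain ⟨b, hb⟩ : ∃ x : ℝ, x = dθ.2 := ⟨_, rfl⟩
  obtain ⟨l, hldef⟩ : ∃ x : ℝ, x = |a| + |b| := ⟨_, rfl⟩
  have hl1 : l1 dθ = l := by rw [hldef, ha, hb]; rfl
  -- size of the perturbation
  have hla : |a| < δ / 100 := by
    have h := norm_fst_le dθ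
    rw [Real.norm_eq_abs] at h
    rw [ha]; exact lt_of_le_of_lt h hrr
  have hlb : |b| < δ / 100 := by
    have h := norm_snd_le dθ
    rw [Real.norm_eq_abs] at h
    rw [hb]; exact lt_of_le_of_lt h hrr
  have hl0 : 0 < l := by
    rw [hldef, ha, hb]
    rcases eq_or_ne dθ.1 0 with h1 | h1
    · have h2 : dθ.2 ≠ 0 := fun h2 => hne (Prod.ext h1 h2)
      have := abs_pos.mpr h2
      have := abs_nonneg dθ.1
      linarith
    · have := abs_pos.mpr h1
      have := abs_nonneg dθ.2
      linarith
  have haa : |a| ≤ l := by rw [hldef]; linarith [abs_nonneg b]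
  have hbb : |b| ≤ l := by rw [hldef]; linarith [abs_nonneg a]
  have hlup : l < δ / 50 := by rw [hldef]; linarith
  have hl002 : l ≤ 0.002 := by linarith
  -- the shift e
  obtain ⟨e, he_def⟩ : ∃ x : ℝ, x = z * a + p * b := ⟨_, rfl⟩
  have hcone' : α * l ≤ |e| := by
    rw [he_def, ha, hb, ← hl1]
    exact hcone
  have habs_z : |z| ≤ 2.1 := abs_le.mpr ⟨by linarith, by linarith⟩
  have habs_p : |p| ≤ 1.8 := abs_le.mpr ⟨by linarith, by linarith⟩
  have he_ub' : |e| ≤ 2.1 * |a| + 1.8 * |b| := by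
    rw [he_def]
    calc |z * a + p * b| ≤ |z * a| + |p * b| := abs_add_le _ _
      _ = |z| * |a| + |p| * |b| := by rw [abs_mul, abs_mul]
      _ ≤ 2.1 * |a| + 1.8 * |b| := by
          have h1 := mul_le_mul_of_nonneg_right habs_z (abs_nonneg a)
          have h2 := mul_le_mul_of_nonneg_right habs_p (abs_nonneg b)
          linarith
  have he_ub : |e| ≤ 4 * l := by
    have := haa; have := hbb
    linarith [abs_nonneg a, abs_nonneg b]
  have heδ8 : |e| ≤ 0.08 * δ := by linarith
  have heδ : |e| ≤ δ := by linarith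
  have he008 : |e| ≤ 0.008 := by linarith
  obtain ⟨K, hK_def⟩ : ∃ x : ℝ, x = 0.2 / δ := ⟨_, rfl⟩
  have hK0 : 0 < K := by rw [hK_def]; positivity
  have hKe : K * |e| ≤ 0.016 := by
    have h1 : K * |e| ≤ K * (0.08 * δ) := mul_le_mul_of_nonneg_left heδ8 hK0.le
    have h2 : K * (0.08 * δ) = 0.016 := by
      rw [hK_def]; field_simp; ring
    linarith
  have hKe0 : 0 ≤ K * |e| := mul_nonneg hK0.le (abs_nonneg e)
  have hKγ2 : 60 ≤ γ ^ 2 * K * α := by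
    rw [hK_def, show γ ^ 2 * (0.2 / δ) * α = γ ^ 2 * α * 0.2 / δ by ring, le_div_iff₀ hδ0]
    linarith
  have h60 : 60 * l ≤ γ ^ 2 * (K * |e|) := by
    have h1 : (γ ^ 2 * K) * (α * l) ≤ (γ ^ 2 * K) * |e| :=
      mul_le_mul_of_nonneg_left hcone' (by positivity)
    have h2 : 0 ≤ (γ ^ 2 * K * α - 60) * l := mul_nonneg (by linarith) hl0.le
    linarith [h1, h2]
  have hγsq : γ ^ 2 ≤ 1 := pow_le_one₀ hγ0.le hγ1.le
  have hKα : 60 ≤ K * α := by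
    have h2 : 0 ≤ (1 - γ ^ 2) * (K * α) :=
      mul_nonneg (by linarith) (mul_pos hK0 hα).le
    linarith [h2]
  have hKel : 60 * l ≤ K * |e| := by
    have h1 : K * (α * l) ≤ K * |e| := mul_le_mul_of_nonneg_left hcone' hK0.le
    have h2 : 0 ≤ (K * α - 60) * l := mul_nonneg (by linarith) hl0.le
    linarith [h1, h2]
  -- trajectory of the unperturbed policy
  have hFp : Fex δ p = w := by
    have h0 : |(0 : ℝ)| ≤ δ := by simpa using hδ0.le
    have := hnear 0 h0
    simpa using this
  have t1₀ : traj δ ((0, 1) : ℝ × ℝ) z 1 = p := by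
    rw [traj_succ, traj_zero, hFz]; norm_num
  have t2₀ : traj δ ((0, 1) : ℝ × ℝ) z 2 = w := by
    rw [show (2 : ℕ) = 1 + 1 from rfl, traj_succ, t1₀, hFp]; norm_num
  have geom₀ : ∀ t, traj δ ((0, 1) : ℝ × ℝ) z (t + 2) = w * (0.5 : ℝ) ^ t :=
    traj_geom hδ0 hδ1 t2₀ (by linarith) (by linarith) (by norm_num) (by norm_num)
      (by norm_num)
  -- trajectory of the perturbed policy
  have hθ'1 : (((0, 1) : ℝ × ℝ) + dθ).1 = a := by rw [ha]; simp [Prod.fst_add]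
  have hθ'2 : (((0, 1) : ℝ × ℝ) + dθ).2 = 1 + b := by rw [hb]; simp [Prod.snd_add]
  have t1' : traj δ (((0, 1) : ℝ × ℝ) + dθ) z 1 = p + e := by
    rw [traj_succ, traj_zero, hFz, hθ'1, hθ'2, he_def]; ring
  have hFpe : Fex δ (p + e) = w - 0.5 * e - K * |e| := by
    rw [hK_def]; exact hnear e heδ
  obtain ⟨q, hq_def⟩ : ∃ x : ℝ, x = w - 0.5 * e - K * |e| := ⟨_, rfl⟩
  obtain ⟨W, hW_def⟩ : ∃ x : ℝ, x = a * (p + e) + (1 + b) * q := ⟨_, rfl⟩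
  have t2' : traj δ (((0, 1) : ℝ × ℝ) + dθ) z 2 = W := by
    rw [show (2 : ℕ) = 1 + 1 from rfl, traj_succ, t1', hFpe, hθ'1, hθ'2, hW_def, hq_def]
  -- bounds on W
  have hq_abs : |q| ≤ 0.75 := by
    rw [hq_def]
    have t1 : |w - 0.5 * e - K * (|e|)| ≤ |w - 0.5 * e| + |K * (|e|)| := abs_sub _ _
    have t2 : |w - 0.5 * e| ≤ |w| + |0.5 * e| := abs_sub _ _
    have t3 : |(0.5 : ℝ) * e| = 0.5 * |e| := by rw [abs_mul]; norm_num
    have t4 : |K * (|e|)| = K * |e| := abs_of_nonneg hKe0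
    have hw_abs : |w| ≤ 0.7 := abs_le.mpr ⟨by linarith, by linarith⟩
    linarith
  have hpe_abs : |p + e| ≤ 1.9 := by
    have := abs_add_le p e
    linarith
  have hE : |W - (w - K * |e|)| ≤ 3 * l := by
    have hWE : W - (w - K * |e|) = a * (p + e) + b * q - 0.5 * e := by
      rw [hW_def, hq_def]; ring
    rw [hWE]
    have t1 : |a * (p + e) + b * q - 0.5 * e| ≤ |a * (p + e)| + |b * q| + |0.5 * e| := by
      have u1 : |a * (p + e) + b * q - 0.5 * e| ≤ |a * (p + e) + b * q| + |0.5 * e| :=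
        abs_sub _ _
      have u2 : |a * (p + e) + b * q| ≤ |a * (p + e)| + |b * q| := abs_add_le _ _
      linarith
    have t2 : |a * (p + e)| ≤ 1.9 * |a| := by
      rw [abs_mul, mul_comm]
      exact mul_le_mul_of_nonneg_right hpe_abs (abs_nonneg a)
    have t3 : |b * q| ≤ 0.75 * |b| := by
      rw [abs_mul, mul_comm]
      exact mul_le_mul_of_nonneg_right hq_abs (abs_nonneg b)
    have t4 : |(0.5 : ℝ) * e| = 0.5 * |e| := by rw [abs_mul]; norm_num
    have t5 : 0.5 * |e| ≤ 1.05 * |a| + 0.9 * |b| := by linarith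
    have t6 : 2.95 * |a| + 1.65 * |b| ≤ 3 * l := by
      rw [hldef]; linarith [abs_nonneg a, abs_nonneg b]
    linarith [t1, t2, t3, t4, t5, t6]
  have hE' := abs_le.mp hE
  have hWub : W ≤ w - 0.75 * (K * |e|) := by
    have h3l : 3 * l ≤ 0.25 * (K * |e|) := by linarith
    linarith [hE'.2]
  have hWlb : -0.73 ≤ W := by linarith [hE'.1]
  have hW0 : W < 0 := by linarith
  have hWsq_lb : w ^ 2 + 0.8 * (K * |e|) ≤ W ^ 2 := by
    have hprod : 0 ≤ ((w - 0.75 * (K * |e|)) - W) * (-(W + (w - 0.75 * (K * |e|)))) :=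
      mul_nonneg (by linarith) (by linarith)
    have hprod2 : 0 ≤ (-1.5 * w - 0.8) * (K * |e|) := mul_nonneg (by linarith) hKe0
    linarith [hprod, hprod2, sq_nonneg (0.75 * (K * |e|))]
  have hWQ : 0 ≤ W ^ 2 - w ^ 2 := by linarith
  have hWsq_ub : W ^ 2 ≤ 0.55 := by
    have hprod : 0 ≤ (W + 0.73) * (-W) := mul_nonneg (by linarith) (by linarith)
    linarith [hprod]
  have hwsq_ub : w ^ 2 ≤ 0.49 := by
    have hprod : 0 ≤ (w + 0.7) * (-w) := mul_nonneg (by linarith) (by linarith)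
    linarith [hprod]
  -- the contraction factor s
  obtain ⟨s, hs_def⟩ : ∃ x : ℝ, x = a + 0.5 + 0.5 * b := ⟨_, rfl⟩
  have hsm1 : s - 0.5 ≤ l := by
    rw [hs_def, hldef]
    linarith [le_abs_self a, le_abs_self b, abs_nonneg b]
  have hsm2 : -l ≤ s - 0.5 := by
    rw [hs_def, hldef]
    linarith [neg_abs_le a, neg_abs_le b]
  have hs_lb : 0.497 ≤ s := by linarith
  have hs_ub : s ≤ 0.503 := by linarith
  have geom' : ∀ t, traj δ (((0, 1) : ℝ × ℝ) + dθ) z (t + 2) = W * s ^ t := by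
    apply traj_geom hδ0 hδ1 t2' (by linarith) hW0 (by linarith) (by linarith)
    rw [hθ'1, hθ'2, hs_def]; ring
  -- closed forms of the two costs
  have hc₀ := cost_closed (z := z) (p := p) (w := w) (σ := (0.5 : ℝ)) hγ0 hγ1 hR0.le
    (by norm_num) (by norm_num) t1₀ geom₀
  have hc' := cost_closed (z := z) (p := p + e) (w := W) (σ := s) hγ0 hγ1 hR0.le
    (by linarith) (by linarith) t1' geom'
  -- denominator bounds
  have hs2ub : s ^ 2 ≤ 0.2531 := by
    have hprod : 0 ≤ (0.503 - s) * s := mul_nonneg (by linarith) (by linarith)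
    linarith [hprod]
  have hd1 : 0.74 ≤ 1 - γ * s ^ 2 := by
    have hprod : 0 ≤ (1 - γ) * s ^ 2 := mul_nonneg (by linarith) (sq_nonneg s)
    linarith [hprod]
  have hd1' : 0 < 1 - γ * s ^ 2 := by linarith
  have hd2 : 0.75 ≤ 1 - γ * (0.5 : ℝ) ^ 2 := by linarith [hγ1]
  have hd2' : 0 < 1 - γ * (0.5 : ℝ) ^ 2 := by linarith
  obtain ⟨u, hu_def⟩ : ∃ x : ℝ, x = (1 + R * s ^ 2) / (1 - γ * s ^ 2) := ⟨_, rfl⟩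
  obtain ⟨v, hv_def⟩ : ∃ x : ℝ, x = (1 + R * (0.5 : ℝ) ^ 2) / (1 - γ * (0.5 : ℝ) ^ 2) :=
    ⟨_, rfl⟩
  have hu1 : 1 ≤ u := by
    rw [hu_def, le_div_iff₀ hd1']
    have hprod : 0 ≤ (γ + R) * s ^ 2 := mul_nonneg (by linarith) (sq_nonneg s)
    linarith [hprod]
  have huv_eq : u - v = (γ + R) * (s ^ 2 - (0.5 : ℝ) ^ 2) /
      ((1 - γ * s ^ 2) * (1 - γ * (0.5 : ℝ) ^ 2)) := by
    rw [hu_def, hv_def]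
    rw [div_sub_div _ _ hd1'.ne' hd2'.ne']
    ring
  have hγR0 : (0 : ℝ) ≤ γ + R := by linarith
  have hγR2 : γ + R ≤ 2 := by linarith
  have hls : l * s ≤ 0.503 * l := by
    have := mul_le_mul_of_nonneg_left hs_ub hl0.le
    linarith [this]
  have hq_ub : s ^ 2 - (0.5 : ℝ) ^ 2 ≤ 1.1 * l := by
    have h1 := mul_le_mul_of_nonneg_right hsm1 (show (0 : ℝ) ≤ s + 0.5 by linarith)
    linarith [h1, hls, hl0.le]
  have hq_lb : -(1.1 * l) ≤ s ^ 2 - (0.5 : ℝ) ^ 2 := by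
    have h1 := mul_le_mul_of_nonneg_right hsm2 (show (0 : ℝ) ≤ s + 0.5 by linarith)
    linarith [h1, hls, hl0.le]
  have hX_ub : (γ + R) * (s ^ 2 - (0.5 : ℝ) ^ 2) ≤ 2.3 * l := by
    have h1 := mul_le_mul_of_nonneg_left hq_ub hγR0
    have h2 : 0 ≤ (2 - (γ + R)) * (1.1 * l) :=
      mul_nonneg (by linarith) (by positivity)
    linarith [h1, h2]
  have hX_lb : -(2.3 * l) ≤ (γ + R) * (s ^ 2 - (0.5 : ℝ) ^ 2) := by
    have h1 := mul_le_mul_of_nonneg_left hq_lb hγR0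
    have h2 : 0 ≤ (2 - (γ + R)) * (1.1 * l) :=
      mul_nonneg (by linarith) (by positivity)
    linarith [h1, h2]
  have hD : 0.555 ≤ (1 - γ * s ^ 2) * (1 - γ * (0.5 : ℝ) ^ 2) := by
    have h1 : 0 ≤ (1 - γ * s ^ 2 - 0.74) * (1 - γ * (0.5 : ℝ) ^ 2 - 0.75) :=
      mul_nonneg (by linarith) (by linarith)
    linarith [h1]
  have hD0 : 0 < (1 - γ * s ^ 2) * (1 - γ * (0.5 : ℝ) ^ 2) := by linarith
  have hDl := mul_le_mul_of_nonneg_left hD (show (0 : ℝ) ≤ 4.2 * l by positivity)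
  have huv_ub : u - v ≤ 4.2 * l := by
    rw [huv_eq, div_le_iff₀ hD0]
    linarith [hX_ub, hDl]
  have huv_lb : -(4.2 * l) ≤ u - v := by
    rw [huv_eq, le_div_iff₀ hD0]
    linarith [hX_lb, hDl]
  -- the main gain estimate
  have hA : 0.8 * (K * |e|) ≤ (W ^ 2 - w ^ 2) * u := by
    have h1 := mul_le_mul_of_nonneg_left hu1 hWQ
    linarith [h1]
  have hB : -(2.1 * l) ≤ w ^ 2 * (u - v) := by
    have h1 := mul_le_mul_of_nonneg_left huv_lb (sq_nonneg w)
    have h2 : 0 ≤ (0.49 - w ^ 2) * (4.2 * l) :=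
      mul_nonneg (by linarith) (by positivity)
    linarith [h1, h2]
  have h3 : 0.8 * (K * |e|) - 2.1 * l ≤ W ^ 2 * u - w ^ 2 * v := by
    linarith [hA, hB]
  -- assembling the cost difference
  rw [hl1, hc', hc₀]
  have hdec : z ^ 2 + R * (p + e) ^ 2 + γ * ((p + e) ^ 2 + R * W ^ 2)
        + γ ^ 2 * W ^ 2 * (1 + R * s ^ 2) / (1 - γ * s ^ 2)
      - (z ^ 2 + R * p ^ 2 + γ * (p ^ 2 + R * w ^ 2)
        + γ ^ 2 * w ^ 2 * (1 + R * (0.5 : ℝ) ^ 2) / (1 - γ * (0.5 : ℝ) ^ 2))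
      = (γ + R) * ((p + e) ^ 2 - p ^ 2) + γ * R * (W ^ 2 - w ^ 2)
        + γ ^ 2 * (W ^ 2 * u - w ^ 2 * v) := by
    rw [hu_def, hv_def]
    field_simp
    ring
  rw [hdec]
  have hP : -(3.6 * |e|) ≤ (p + e) ^ 2 - p ^ 2 := by
    have h1 : 0 ≤ (2 * p) * (e + |e|) :=
      mul_nonneg (by linarith) (by linarith [neg_abs_le e])
    have h2 : 0 ≤ (3.6 - 2 * p) * |e| := mul_nonneg (by linarith) (abs_nonneg e)
    linarith [h1, h2, sq_nonneg e]
  have hPP : -(7.2 * |e|) ≤ (γ + R) * ((p + e) ^ 2 - p ^ 2) := by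
    have h1 := mul_le_mul_of_nonneg_left hP hγR0
    have h2 : 0 ≤ (2 - (γ + R)) * (3.6 * |e|) :=
      mul_nonneg (by linarith) (by positivity)
    linarith [h1, h2]
  have hQQ : 0 ≤ γ * R * (W ^ 2 - w ^ 2) := mul_nonneg (by positivity) hWQ
  have hSS : γ ^ 2 * (0.8 * (K * |e|) - 2.1 * l) ≤ γ ^ 2 * (W ^ 2 * u - w ^ 2 * v) :=
    mul_le_mul_of_nonneg_left h3 (sq_nonneg γ)
  have hS2 : 48 * l - 2.1 * l ≤ γ ^ 2 * (0.8 * (K * |e|) - 2.1 * l) := by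
    have h2 : 0 ≤ (1 - γ ^ 2) * (2.1 * l) := mul_nonneg (by linarith) (by positivity)
    linarith [h60, h2]
  have h72 : 7.2 * |e| ≤ 28.8 * l := by linarith
  linarith [hPP, hQQ, hSS, hS2, h72, hl0.le]

/-- Outside the cone `{|z·dθ₀ + F(z)·dθ₁| ≥ α‖dθ‖₁}` associated with an atomic initial
state `z ∈ {x⋆, y⋆}`, every small perturbation of `θ = (0,1)` strictly increases the cost,
with increase bounded below by a multiple of `‖dθ‖₁`. -/
theorem cost_increase_outside_cone (γ R : ℝ)
    (hγ : γ ∈ Set.Ioo (0 : ℝ) 1) (hR : R ∈ Set.Ioo (0 : ℝ) γ)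
    (α : ℝ) (hα : 0 < α) :
    ∃ δ > (0 : ℝ), ∃ c > (0 : ℝ), ∃ r > (0 : ℝ),
      ∀ z ∈ ({xstar δ, ystar δ} : Set ℝ),
        ∀ dθ : ℝ × ℝ, dθ ≠ 0 → ‖dθ‖ < r →
          α * l1 dθ ≤ |z * dθ.1 + Fex δ z * dθ.2| →
          c * l1 dθ ≤
            cost γ R δ (((0, 1) : ℝ × ℝ) + dθ) z - cost γ R δ ((0, 1) : ℝ × ℝ) z := by
  obtain ⟨hγ0, hγ1⟩ := hγ
  obtain ⟨hR0, hRγ⟩ := hR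
  obtain ⟨δ, hδeq⟩ : ∃ x : ℝ, x = min (0.1 : ℝ) (γ ^ 2 * α / 300) := ⟨_, rfl⟩
  have hδ0 : 0 < δ := by
    rw [hδeq]; exact lt_min (by norm_num) (by positivity)
  have hδ1 : δ ≤ 0.1 := by rw [hδeq]; exact min_le_left _ _
  have hδK : δ ≤ γ ^ 2 * α / 300 := by rw [hδeq]; exact min_le_right _ _
  refine ⟨δ, hδ0, 1, one_pos, δ / 100, by positivity, ?_⟩
  intro z hz dθ hne hrr hcone
  have hxs := xstar_eq hδ0 hδ1
  have hys := ystar_eq hδ0 hδ1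
  simp only [Set.mem_insert_iff, Set.mem_singleton_iff] at hz
  rcases hz with hz | hz
  · subst hz
    rw [hxs] at hcone ⊢
    have hFz : Fex δ (-123 / 61) = 1.5 := by
      rw [Fex_mid hδ0 hδ1 (by norm_num) (by norm_num)]; norm_num
    rw [hFz] at hcone
    exact key γ R hγ0 hγ1 hR0 hRγ α hα δ hδ0 hδ1 hδK (-123 / 61) 1.5 (-0.55)
      (by norm_num) (by norm_num) hFz (by norm_num) (by norm_num) (by norm_num)
      (by norm_num) (fun e he => Fex_near15 hδ0 hδ1 he) dθ hne hrr hcone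
  · subst hz
    rw [hys] at hcone ⊢
    have hFz : Fex δ (-612 / 305) = 1.8 := by
      rw [Fex_mid hδ0 hδ1 (by norm_num) (by norm_num)]; norm_num
    rw [hFz] at hcone
    exact key γ R hγ0 hγ1 hR0 hRγ α hα δ hδ0 hδ1 hδK (-612 / 305) 1.8 (-0.7)
      (by norm_num) (by norm_num) hFz (by norm_num) (by norm_num) (by norm_num)
      (by norm_num) (fun e he => Fex_near18 hδ0 hδ1 he) dθ hne hrr hcone
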